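/- The monic polynomials Q_n satisfy the three-term recurrence of order three: z·Q_n(z) = Q_{n+1}(z) + a_n Q_{n-2}(z) for n ≥ 2, with initial conditions Q_j(z) = z^j for j = 0,1,2, where the recurrence coefficients are real and given by a_{2n} = (∫₀^α t^n Q_{2n} s₁ dt)/(∫₀^α t^{n-1} Q_{2n-2} s₁ dt) and a_{2n+1} = (∫₀^α t^n Q_{2n+1} f s₁ dt)/(∫₀^α t^{n-1} Q_{2n-1} f s₁ dt). -/

import Mathlib

open Complex Finset intervalIntegral Polynomial MeasureTheory Set

noncomputable section

/-- The primitive cube root of unity `e^{2πi/3}`. -/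
def ω : ℂ := Complex.exp (2 * Real.pi * Complex.I / 3)

/-- Integral over the star `S₀ = ⋃_{k=0}^{2} ωᵏ[0,α]`: the sum of the three
ray integrals (with the parametrization `z = ωᵏ t`, `dz = ωᵏ dt`). -/
def starIntegral (α : ℝ) (g : ℂ → ℂ) : ℂ :=
  ∑ k ∈ Finset.range 3, ∫ t in (0:ℝ)..α, g (ω ^ k * (t : ℂ)) * ω ^ k

/-- The function `f(z) = z² ∫_{-b}^{-a} s₂(t)/(z³-t³) dt`. -/
def fTrans (a b : ℝ) (s₂ : ℝ → ℝ) (z : ℂ) : ℂ :=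
  z ^ 2 * ∫ t in (-b)..(-a), (s₂ t : ℂ) / (z ^ 3 - (t : ℂ) ^ 3)

/-- The multiple orthogonality conditions for `Q` at index `m`: orthogonality to
`tᵏ s₁(t)` for `k < ⌈m/2⌉` and to `tᵏ f(t)s₁(t)` for `k < ⌊m/2⌋` on `S₀`. -/
def OrthCond (α a b : ℝ) (s₁ : ℂ → ℂ) (s₂ : ℝ → ℝ) (Q : Polynomial ℂ) (m : ℕ) : Prop :=
  (∀ k < (m + 1) / 2, starIntegral α (fun z => Q.eval z * z ^ k * s₁ z) = 0) ∧
  (∀ k < m / 2, starIntegral α (fun z => Q.eval z * z ^ k * fTrans a b s₂ z * s₁ z) = 0)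

/-- `Q` is the monic polynomial of minimal degree satisfying the multiple
orthogonality conditions at index `m`. -/
def IsMOP (α a b : ℝ) (s₁ : ℂ → ℂ) (s₂ : ℝ → ℝ) (Q : Polynomial ℂ) (m : ℕ) : Prop :=
  Q.Monic ∧ OrthCond α a b s₁ s₂ Q m ∧
    ∀ R : Polynomial ℂ, R.Monic → OrthCond α a b s₁ s₂ R m → Q.degree ≤ R.degree


/-! ### auxiliary lemmas -/

lemma omega_pow_three : ω ^ 3 = 1 := by
  rw [ω, ← Complex.exp_nat_mul]
  rw [show ((3:ℕ):ℂ) * (2 * Real.pi * Complex.I / 3) = 2 * Real.pi * Complex.I by push_cast; ring]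
  exact Complex.exp_two_pi_mul_I

lemma omega_ne_one : ω ≠ 1 := by
  intro heq
  have heq' : Complex.exp (2 * Real.pi * Complex.I / 3) = 1 := heq
  rw [Complex.exp_eq_one_iff] at heq'
  obtain ⟨n, h⟩ := heq'
  have hne : (2 * Real.pi * Complex.I) ≠ 0 := by
    simp [Real.pi_ne_zero, Complex.I_ne_zero, Complex.ofReal_ne_zero]
  have h3 : (2 * Real.pi * Complex.I) * 1 = (2 * Real.pi * Complex.I) * (3 * n) := by
    rw [mul_one]
    rw [show (2 * Real.pi * Complex.I) * (3*n) = 3 * ((n:ℂ) * (2 * Real.pi * Complex.I)) by ring, ← h]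
    ring
  have := mul_left_cancel₀ hne h3
  have h1 : ((3 * n : ℤ) : ℂ) = 1 := by push_cast; linear_combination -this
  have : (3 * n : ℤ) = 1 := by exact_mod_cast h1
  omega

lemma omega_pow_mod (k : ℕ) : ω ^ k = ω ^ (k % 3) := by
  conv_lhs => rw [← Nat.div_add_mod k 3]
  rw [pow_add, pow_mul, omega_pow_three, one_pow, one_mul]

lemma omega_sum : 1 + ω + ω ^ 2 = 0 := by
  have h : (ω - 1) * (1 + ω + ω ^ 2) = 0 := by
    linear_combination omega_pow_three
  rcases mul_eq_zero.mp h with h1 | h2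
  · exact absurd (by linear_combination h1) omega_ne_one
  · exact h2

lemma sum_omega_pow (c : ℕ) : (∑ j ∈ Finset.range 3, ω ^ (j * c)) = if 3 ∣ c then 3 else 0 := by
  have hexp : ∑ j ∈ Finset.range 3, ω ^ (j * c) = 1 + ω ^ c + (ω ^ c) ^ 2 := by
    rw [Finset.sum_range_succ, Finset.sum_range_succ, Finset.sum_range_one]
    ring_nf
  rw [hexp]
  by_cases h : 3 ∣ c
  · obtain ⟨d, rfl⟩ := h
    rw [if_pos ⟨d, rfl⟩, pow_mul, omega_pow_three, one_pow]
    norm_num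
  · rw [if_neg h, omega_pow_mod c]
    have h3 : c % 3 = 1 ∨ c % 3 = 2 := by omega
    rcases h3 with hc | hc <;> rw [hc]
    · simpa using omega_sum
    · have : (ω^2)^2 = ω := by
        rw [← pow_mul, omega_pow_mod]
        norm_num
      rw [this]
      linear_combination omega_sum

lemma sym_iter {h : ℂ → ℂ} {c : ℕ} (hs : ∀ z, h (ω * z) = ω ^ c * h z) :
    ∀ (j : ℕ) (z : ℂ), h (ω ^ j * z) = ω ^ (j * c) * h z := by
  intro j
  induction j with
  | zero => simp
  | succ j ih =>
    intro z
    have : ω ^ (j+1) * z = ω ^ j * (ω * z) := by ring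
    rw [this, ih, hs]
    ring

lemma starIntegral_of_sym (α : ℝ) (h : ℂ → ℂ) (c : ℕ) (hs : ∀ z, h (ω * z) = ω ^ c * h z) :
    starIntegral α h = (if 3 ∣ (c + 1) then 3 else 0) * ∫ t in (0:ℝ)..α, h t := by
  rw [starIntegral, ← sum_omega_pow]
  rw [Finset.sum_mul]
  apply Finset.sum_congr rfl
  intro j _
  have : (fun t : ℝ => h (ω ^ j * t) * ω ^ j) = fun t : ℝ => ω ^ (j * (c+1)) * h t := by
    funext t
    rw [sym_iter hs j]
    rw [mul_add, pow_add, mul_one]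
    ring
  rw [this, intervalIntegral.integral_const_mul]

lemma starIntegral_congr {α : ℝ} {g g' : ℂ → ℂ} (h : ∀ z, g z = g' z) :
    starIntegral α g = starIntegral α g' := by
  have : g = g' := funext h
  rw [this]

lemma si_smul (α : ℝ) (w : ℂ → ℂ) (c : ℂ) (p : Polynomial ℂ) (k : ℕ) :
    starIntegral α (fun z => (Polynomial.C c * p).eval z * z ^ k * w z)
      = c * starIntegral α (fun z => p.eval z * z ^ k * w z) := by
  rw [starIntegral, starIntegral, Finset.mul_sum]
  apply Finset.sum_congr rfl
  intro j _
  rw [← intervalIntegral.integral_const_mul]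
  apply intervalIntegral.integral_congr
  intro t _
  simp only [Polynomial.eval_mul, Polynomial.eval_C]
  ring

lemma si_sub (α : ℝ) (w : ℂ → ℂ) (cw : ℕ) (hw : ∀ z, w (ω * z) = ω ^ cw * w z)
    (hint : ∀ q : Polynomial ℂ, IntervalIntegrable (fun t : ℝ => q.eval (t:ℂ) * w t) volume 0 α)
    (p q : Polynomial ℂ) (k : ℕ) :
    starIntegral α (fun z => (p - q).eval z * z ^ k * w z)
      = starIntegral α (fun z => p.eval z * z ^ k * w z)
        - starIntegral α (fun z => q.eval z * z ^ k * w z) := by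
  have key : ∀ (r : Polynomial ℂ) (j : ℕ),
      (fun t : ℝ => r.eval (ω ^ j * (t:ℂ)) * (ω ^ j * (t:ℂ)) ^ k * w (ω ^ j * t) * ω ^ j)
        = fun t : ℝ => ((r.comp (Polynomial.C (ω ^ j) * Polynomial.X)
            * Polynomial.C (ω ^ (j * (cw + k + 1))) * Polynomial.X ^ k).eval (t:ℂ)) * w t := by
    intro r j
    funext t
    rw [sym_iter hw j]
    simp only [Polynomial.eval_mul, Polynomial.eval_comp, Polynomial.eval_C, Polynomial.eval_X,
      Polynomial.eval_pow]
    rw [show j * (cw + k + 1) = k * j + j * cw + j by ring]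
    rw [pow_add, pow_add, pow_mul, mul_pow]
    ring
  rw [starIntegral, starIntegral, starIntegral, ← Finset.sum_sub_distrib]
  apply Finset.sum_congr rfl
  intro j _
  rw [show (fun t : ℝ => (p-q).eval (ω ^ j * (t:ℂ)) * (ω ^ j * (t:ℂ)) ^ k * w (ω ^ j * t) * ω ^ j)
      = _ from key (p - q) j]
  rw [show (fun t : ℝ => p.eval (ω ^ j * (t:ℂ)) * (ω ^ j * (t:ℂ)) ^ k * w (ω ^ j * t) * ω ^ j)
      = _ from key p j]
  rw [show (fun t : ℝ => q.eval (ω ^ j * (t:ℂ)) * (ω ^ j * (t:ℂ)) ^ k * w (ω ^ j * t) * ω ^ j)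
      = _ from key q j]
  rw [← intervalIntegral.integral_sub (hint _) (hint _)]
  apply intervalIntegral.integral_congr
  intro t _
  simp only [Polynomial.sub_comp, Polynomial.eval_mul, Polynomial.eval_sub]
  ring

lemma intervalIntegral_conj {f : ℝ → ℂ} {x y : ℝ} :
    (∫ u in x..y, (starRingEnd ℂ) (f u)) = (starRingEnd ℂ) (∫ u in x..y, f u) := by
  rw [intervalIntegral, intervalIntegral, integral_conj, integral_conj, map_sub]

lemma fTrans_conj (a b : ℝ) (s₂ : ℝ → ℝ) (t : ℝ) :
    (starRingEnd ℂ) (fTrans a b s₂ t) = fTrans a b s₂ t := by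
  rw [fTrans, map_mul]
  congr 1
  · rw [map_pow, Complex.conj_ofReal]
  · rw [← intervalIntegral_conj]
    apply intervalIntegral.integral_congr
    intro u _
    dsimp only
    rw [map_div₀, Complex.conj_ofReal, map_sub, map_pow, map_pow, Complex.conj_ofReal,
      Complex.conj_ofReal]

lemma fTrans_sym (a b : ℝ) (s₂ : ℝ → ℝ) (z : ℂ) :
    fTrans a b s₂ (ω * z) = ω ^ 2 * fTrans a b s₂ z := by
  rw [fTrans, fTrans]
  rw [show (ω * z) ^ 3 = z ^ 3 by rw [mul_pow, omega_pow_three, one_mul]]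
  ring

lemma cube_lb {a t u : ℝ} (ha : 0 < a) (ht : -(a/2) < t) (hu : u ≤ -a) :
    7/8 * a^3 ≤ t^3 - u^3 := by
  have h1 : u^3 ≤ -a^3 := by nlinarith [sq_nonneg (u + a), sq_nonneg (u - a), sq_nonneg u, sq_nonneg a]
  have h2 : -(a^3)/8 ≤ t^3 := by nlinarith [sq_nonneg (t + a/2), sq_nonneg (t - a/2), sq_nonneg t]
  linarith

lemma fTrans_contAt {a b : ℝ} {s₂ : ℝ → ℝ} (ha : 0 < a) (hab : a < b)
    (hs₂int : IntervalIntegrable s₂ volume (-b) (-a)) {t₀ : ℝ} (ht₀ : 0 ≤ t₀) :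
    ContinuousAt (fun t : ℝ => fTrans a b s₂ (t : ℂ)) t₀ := by
  have hba : -b ≤ -a := by linarith
  have hIoc : Set.uIoc (-b) (-a) = Set.Ioc (-b) (-a) := Set.uIoc_of_le hba
  have hmem : ∀ᶠ t in nhds t₀, t ∈ Set.Ioi (-(a/2)) :=
    isOpen_Ioi.eventually_mem (by simp only [Set.mem_Ioi]; linarith)
  apply ContinuousAt.mul
  · exact ((continuous_ofReal.pow 2)).continuousAt
  · apply intervalIntegral.continuousAt_of_dominated_interval
      (bound := fun u => |s₂ u| * (8 / (7 * a^3)))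
    · filter_upwards [hmem] with t ht
      rw [hIoc]
      have hmeas : AEStronglyMeasurable (fun u : ℝ => (s₂ u : ℂ))
          (volume.restrict (Set.Ioc (-b) (-a))) :=
        continuous_ofReal.comp_aestronglyMeasurable hs₂int.1.aestronglyMeasurable
      have hden : ContinuousOn (fun u : ℝ => (((t:ℂ)^3 - (u:ℂ)^3))⁻¹) (Set.Ioc (-b) (-a)) := by
        apply ContinuousOn.inv₀
        · exact (continuous_const.sub ((continuous_ofReal.pow 3))).continuousOn
        · intro u hu
          have := cube_lb ha ht hu.2
          have hne : (0:ℝ) < t^3 - u^3 := by nlinarith [pow_pos ha 3]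
          rw [show ((t:ℂ)^3 - (u:ℂ)^3) = ((t^3 - u^3 : ℝ) : ℂ) by push_cast; ring]
          exact_mod_cast ne_of_gt hne
      have := hmeas.mul (hden.aestronglyMeasurable measurableSet_Ioc)
      apply AEStronglyMeasurable.congr this
      filter_upwards with u
      simp [div_eq_mul_inv]
    · filter_upwards [hmem] with t ht
      filter_upwards with u hu
      rw [hIoc] at hu
      have hlb := cube_lb ha ht hu.2
      have hpos : (0:ℝ) < t^3 - u^3 := by nlinarith [pow_pos ha 3]
      rw [show ((t:ℂ)^3 - (u:ℂ)^3) = ((t^3 - u^3 : ℝ) : ℂ) by push_cast; ring]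
      rw [norm_div, Complex.norm_real, Complex.norm_real, Real.norm_eq_abs, Real.norm_eq_abs]
      rw [abs_of_pos hpos]
      rw [div_le_iff₀ hpos]
      have h8 : 0 < 7 * a^3 := by positivity
      calc |s₂ u| = |s₂ u| * 1 := by ring
        _ ≤ |s₂ u| * ((8 / (7*a^3)) * (t^3 - u^3)) := by
            apply mul_le_mul_of_nonneg_left _ (abs_nonneg _)
            rw [div_mul_eq_mul_div, le_div_iff₀ h8]
            linarith
        _ = |s₂ u| * (8 / (7*a^3)) * (t^3 - u^3) := by ring
    · exact (hs₂int.abs).mul_const _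
    · filter_upwards with u hu
      rw [hIoc] at hu
      apply ContinuousAt.div continuousAt_const
      · exact ((continuous_ofReal.pow 3).sub continuous_const).continuousAt
      · have hlb := cube_lb ha (by linarith : -(a/2) < t₀) hu.2
        have hpos : (0:ℝ) < t₀^3 - u^3 := by nlinarith [pow_pos ha 3]
        rw [show ((t₀:ℂ)^3 - (u:ℂ)^3) = ((t₀^3 - u^3 : ℝ) : ℂ) by push_cast; ring]
        exact_mod_cast ne_of_gt hpos

/-- the monic polynomials `Q_n` satisfy the three-term recurrence of
order three `z Q_n = Q_{n+1} + a_n Q_{n-2}` for `n ≥ 2`, with `Q_j = X^j` for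
`j = 0,1,2`, where the coefficients `a_n` are real and given by
`a_{2m} = (∫₀^α t^m Q_{2m} s₁)/(∫₀^α t^{m-1} Q_{2m-2} s₁)` and
`a_{2m+1} = (∫₀^α t^m Q_{2m+1} f s₁)/(∫₀^α t^{m-1} Q_{2m-1} f s₁)`. -/
theorem statement5 (α a b : ℝ) (hα : 0 < α) (ha : 0 < a) (hab : a < b)
    (s₁ : ℂ → ℂ) (s₂ : ℝ → ℝ)
    (hs₁sym : ∀ z : ℂ, s₁ (ω * z) = ω ^ 2 * s₁ z)
    (hs₁real : ∀ t : ℝ, t ∈ Set.Ioo 0 α → ∃ r : ℝ, 0 ≤ r ∧ s₁ (t : ℂ) = (r : ℂ))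
    (hs₁int : IntervalIntegrable (fun t : ℝ => s₁ (t : ℂ)) volume 0 α)
    (hs₁ne : ∫ t in (0:ℝ)..α, s₁ (t : ℂ) ≠ 0)
    (hs₂pos : ∀ t ∈ Set.Icc (-b) (-a), 0 ≤ s₂ t)
    (hs₂int : IntervalIntegrable s₂ volume (-b) (-a))
    (hs₂ne : ∫ t in (-b)..(-a), s₂ t ≠ 0)
    (Q : ℕ → Polynomial ℂ) (hQ : ∀ m, IsMOP α a b s₁ s₂ (Q m) m)
    (hden : ∀ m : ℕ, 1 ≤ m →
      (∫ t in (0:ℝ)..α, (t : ℂ) ^ (m - 1) * (Q (2 * m - 2)).eval (t : ℂ) * s₁ (t : ℂ)) ≠ 0 ∧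
      (∫ t in (0:ℝ)..α, (t : ℂ) ^ (m - 1) * (Q (2 * m - 1)).eval (t : ℂ) *
        fTrans a b s₂ (t : ℂ) * s₁ (t : ℂ)) ≠ 0) :
    (∀ j : ℕ, j ≤ 2 → Q j = Polynomial.X ^ j) ∧
    (∀ n : ℕ, 2 ≤ n → ∃ an : ℝ,
      Polynomial.X * Q n = Q (n + 1) + Polynomial.C (an : ℂ) * Q (n - 2) ∧
      (∀ m : ℕ, n = 2 * m →
        (an : ℂ) = (∫ t in (0:ℝ)..α, (t : ℂ) ^ m * (Q n).eval (t : ℂ) * s₁ (t : ℂ)) /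
          (∫ t in (0:ℝ)..α, (t : ℂ) ^ (m - 1) * (Q (n - 2)).eval (t : ℂ) * s₁ (t : ℂ))) ∧
      (∀ m : ℕ, n = 2 * m + 1 →
        (an : ℂ) = (∫ t in (0:ℝ)..α, (t : ℂ) ^ m * (Q n).eval (t : ℂ) *
            fTrans a b s₂ (t : ℂ) * s₁ (t : ℂ)) /
          (∫ t in (0:ℝ)..α, (t : ℂ) ^ (m - 1) * (Q (n - 2)).eval (t : ℂ) *
            fTrans a b s₂ (t : ℂ) * s₁ (t : ℂ)))) := by
  -- basic setup
  have h0α : (0:ℝ) ≤ α := le_of_lt hα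
  have huIcc : Set.uIcc (0:ℝ) α = Set.Icc 0 α := Set.uIcc_of_le h0α
  have pcont : ∀ q : Polynomial ℂ, Continuous (fun t : ℝ => q.eval (t:ℂ)) :=
    fun q => q.continuous.comp continuous_ofReal
  have fcont : ContinuousOn (fun t : ℝ => fTrans a b s₂ (t:ℂ)) (Set.uIcc 0 α) := by
    rw [huIcc]
    exact fun t ht => (fTrans_contAt ha hab hs₂int ht.1).continuousWithinAt
  have hint1 : ∀ q : Polynomial ℂ,
      IntervalIntegrable (fun t : ℝ => q.eval (t:ℂ) * s₁ t) volume 0 α :=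
    fun q => hs₁int.continuousOn_mul (pcont q).continuousOn
  have hint2 : ∀ q : Polynomial ℂ,
      IntervalIntegrable (fun t : ℝ => q.eval (t:ℂ) * (fTrans a b s₂ t * s₁ t)) volume 0 α := by
    intro q
    have h := hs₁int.continuousOn_mul ((pcont q).continuousOn.mul fcont)
    simpa only [Pi.mul_apply, mul_assoc] using h
  have hint1' : ∀ (q : Polynomial ℂ) (k : ℕ),
      IntervalIntegrable (fun t : ℝ => q.eval (t:ℂ) * (t:ℂ)^k * s₁ t) volume 0 α :=
    fun q k => hs₁int.continuousOn_mul ((pcont q).mul ((continuous_ofReal.pow k))).continuousOn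
  have hint2' : ∀ (q : Polynomial ℂ) (k : ℕ),
      IntervalIntegrable
        (fun t : ℝ => q.eval (t:ℂ) * (t:ℂ)^k * fTrans a b s₂ t * s₁ t) volume 0 α :=
    fun q k => hs₁int.continuousOn_mul
      ((((pcont q).mul (continuous_ofReal.pow k)).continuousOn).mul fcont)
  have w2sym : ∀ z : ℂ, fTrans a b s₂ (ω * z) * s₁ (ω * z)
      = ω ^ 4 * (fTrans a b s₂ z * s₁ z) := by
    intro z
    rw [fTrans_sym, hs₁sym]
    ring
  -- star integral of symmetric polynomial integrands
  have ray1 : ∀ (p : Polynomial ℂ) (r : ℕ), (∀ z, p.eval (ω*z) = ω^r * p.eval z) → ∀ k : ℕ,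
      starIntegral α (fun z => p.eval z * z^k * s₁ z)
        = (if 3 ∣ (r+k+3) then 3 else 0) * ∫ t in (0:ℝ)..α, p.eval (t:ℂ) * (t:ℂ)^k * s₁ t := by
    intro p r hp k
    have hsym : ∀ z : ℂ, p.eval (ω*z) * (ω*z)^k * s₁ (ω*z) = ω^(r+k+2) * (p.eval z * z^k * s₁ z) := by
      intro z
      rw [hp, hs₁sym, mul_pow]
      ring
    have := starIntegral_of_sym α (fun z => p.eval z * z^k * s₁ z) (r+k+2) hsym
    rw [this, show r+k+2+1 = r+k+3 from by omega]
  have ray2 : ∀ (p : Polynomial ℂ) (r : ℕ), (∀ z, p.eval (ω*z) = ω^r * p.eval z) → ∀ k : ℕ,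
      starIntegral α (fun z => p.eval z * z^k * fTrans a b s₂ z * s₁ z)
        = (if 3 ∣ (r+k+5) then 3 else 0)
          * ∫ t in (0:ℝ)..α, p.eval (t:ℂ) * (t:ℂ)^k * fTrans a b s₂ t * s₁ t := by
    intro p r hp k
    have hsym : ∀ z : ℂ, p.eval (ω*z) * (ω*z)^k * fTrans a b s₂ (ω*z) * s₁ (ω*z)
        = ω^(r+k+4) * (p.eval z * z^k * fTrans a b s₂ z * s₁ z) := by
      intro z
      rw [hp, hs₁sym, fTrans_sym, mul_pow]
      ring
    have := starIntegral_of_sym α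
      (fun z => p.eval z * z^k * fTrans a b s₂ z * s₁ z) (r+k+4) hsym
    rw [this, show r+k+4+1 = r+k+5 from by omega]
  -- extraction of single-ray vanishing from the orthogonality conditions
  have cond1 : ∀ (j : ℕ), (∀ z, (Q j).eval (ω*z) = ω^j * (Q j).eval z) → ∀ k : ℕ,
      k < (j+1)/2 → 3 ∣ (j+k+3) →
      (∫ t in (0:ℝ)..α, (Q j).eval (t:ℂ) * (t:ℂ)^k * s₁ t) = 0 := by
    intro j hsym k hk hd
    have h0 := (hQ j).2.1.1 k hk
    rw [ray1 (Q j) j hsym k, if_pos hd] at h0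
    exact (mul_eq_zero.mp h0).resolve_left (by norm_num)
  have cond2 : ∀ (j : ℕ), (∀ z, (Q j).eval (ω*z) = ω^j * (Q j).eval z) → ∀ k : ℕ,
      k < j/2 → 3 ∣ (j+k+5) →
      (∫ t in (0:ℝ)..α, (Q j).eval (t:ℂ) * (t:ℂ)^k * fTrans a b s₂ t * s₁ t) = 0 := by
    intro j hsym k hk hd
    have h0 := (hQ j).2.1.2 k hk
    rw [ray2 (Q j) j hsym k, if_pos hd] at h0
    exact (mul_eq_zero.mp h0).resolve_left (by norm_num)
  -- monotonicity of the orthogonality conditions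
  have mono : ∀ (R : Polynomial ℂ) (m m' : ℕ), m ≤ m' →
      OrthCond α a b s₁ s₂ R m' → OrthCond α a b s₁ s₂ R m := by
    intro R m m' h hO
    exact ⟨fun k hk => hO.1 k (lt_of_lt_of_le hk (Nat.div_le_div_right (by omega))),
      fun k hk => hO.2 k (lt_of_lt_of_le hk (Nat.div_le_div_right h))⟩
  -- linearity of the orthogonality conditions
  have orth_sub_smul : ∀ (P R : Polynomial ℂ) (c : ℂ) (N : ℕ),
      OrthCond α a b s₁ s₂ P N → OrthCond α a b s₁ s₂ R N →
      OrthCond α a b s₁ s₂ (Polynomial.C c * (P - R)) N := by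
    intro P R c N hP hR
    constructor
    · intro k hk
      rw [si_smul α s₁ c (P - R) k, si_sub α s₁ 2 hs₁sym hint1 P R k, hP.1 k hk, hR.1 k hk]
      simp
    · intro k hk
      have e0 : starIntegral α (fun z => (Polynomial.C c * (P-R)).eval z * z^k * fTrans a b s₂ z * s₁ z)
          = starIntegral α (fun z => (Polynomial.C c * (P-R)).eval z * z^k * (fTrans a b s₂ z * s₁ z)) :=
        starIntegral_congr (fun z => by ring)
      have e1 : starIntegral α (fun z => P.eval z * z^k * (fTrans a b s₂ z * s₁ z))
          = starIntegral α (fun z => P.eval z * z^k * fTrans a b s₂ z * s₁ z) :=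
        starIntegral_congr (fun z => by ring)
      have e2 : starIntegral α (fun z => R.eval z * z^k * (fTrans a b s₂ z * s₁ z))
          = starIntegral α (fun z => R.eval z * z^k * fTrans a b s₂ z * s₁ z) :=
        starIntegral_congr (fun z => by ring)
      rw [e0, si_smul α (fun z => fTrans a b s₂ z * s₁ z) c (P - R) k,
        si_sub α (fun z => fTrans a b s₂ z * s₁ z) 4 w2sym hint2 P R k,
        e1, e2, hP.2 k hk, hR.2 k hk]
      simp
  -- uniqueness of monic solutions of minimal degree
  have uniq : ∀ (N : ℕ), (∀ j, j ≤ N → (Q j).natDegree = j) →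
      ∀ R : Polynomial ℂ, R.Monic → OrthCond α a b s₁ s₂ R N → R.natDegree = N → R = Q N := by
    intro N hjall R hRm hRo hRd
    by_contra hne
    have hQm := (hQ N).1
    have hQd : (Q N).natDegree = N := hjall N le_rfl
    have hD : Q N - R ≠ 0 := sub_ne_zero.mpr (fun h => hne h.symm)
    have hdlt : (Q N - R).degree < (Q N).degree := by
      apply Polynomial.degree_sub_lt _ hQm.ne_zero
      · rw [hQm.leadingCoeff, hRm.leadingCoeff]
      · rw [Polynomial.degree_eq_natDegree hQm.ne_zero, Polynomial.degree_eq_natDegree hRm.ne_zero,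
          hQd, hRd]
    have hcne : ((Q N - R).leadingCoeff)⁻¹ ≠ 0 := inv_ne_zero (Polynomial.leadingCoeff_ne_zero.mpr hD)
    have hDm : (Polynomial.C ((Q N - R).leadingCoeff)⁻¹ * (Q N - R)).Monic := by
      rw [mul_comm]
      exact Polynomial.monic_mul_leadingCoeff_inv hD
    have hDo : OrthCond α a b s₁ s₂ (Polynomial.C ((Q N - R).leadingCoeff)⁻¹ * (Q N - R)) N :=
      orth_sub_smul (Q N) R _ N (hQ N).2.1 hRo
    have hDdeg : (Polynomial.C ((Q N - R).leadingCoeff)⁻¹ * (Q N - R)).natDegree < N := by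
      have h1 : (Q N - R).natDegree < (Q N).natDegree :=
        Polynomial.natDegree_lt_natDegree hD hdlt
      have h2 : (Polynomial.C ((Q N - R).leadingCoeff)⁻¹ * (Q N - R)).natDegree
          = (Q N - R).natDegree := by
        rw [Polynomial.natDegree_C_mul hcne]
      omega
    set D := Polynomial.C ((Q N - R).leadingCoeff)⁻¹ * (Q N - R) with hDdef
    have hcond : OrthCond α a b s₁ s₂ D (D.natDegree + 1) :=
      mono D (D.natDegree + 1) N (by omega) hDo
    have hmin := (hQ (D.natDegree + 1)).2.2 D hDm hcond
    have hmin' := Polynomial.natDegree_le_natDegree hmin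
    have hd1 : (Q (D.natDegree + 1)).natDegree = D.natDegree + 1 := hjall _ (by omega)
    omega
  -- a helpful constant-integral identity
  have intone : (∫ t in (0:ℝ)..α, (1:Polynomial ℂ).eval (t:ℂ) * (t:ℂ)^0 * s₁ t)
      = ∫ t in (0:ℝ)..α, s₁ t :=
    intervalIntegral.integral_congr (fun t _ => by simp)
  -- a.e. realness helpers
  have hane : ∀ᵐ t : ℝ ∂(volume : Measure ℝ), t ≠ α := by
    have hset : {t : ℝ | ¬ t ≠ α} = {α} := by ext; simp
    rw [MeasureTheory.ae_iff, hset]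
    exact Real.volume_singleton
  have real1 : ∀ (g : Polynomial ℂ), (∀ t : ℝ, (starRingEnd ℂ) (g.eval (t:ℂ)) = g.eval (t:ℂ)) →
      ∀ k : ℕ, (starRingEnd ℂ) (∫ t in (0:ℝ)..α, g.eval (t:ℂ) * (t:ℂ)^k * s₁ t)
        = ∫ t in (0:ℝ)..α, g.eval (t:ℂ) * (t:ℂ)^k * s₁ t := by
    intro g hg k
    rw [← _root_.intervalIntegral_conj]
    apply intervalIntegral.integral_congr_ae
    filter_upwards [hane] with t htne htmem
    rw [Set.uIoc_of_le h0α] at htmem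
    obtain ⟨r, _, hr⟩ := hs₁real t ⟨htmem.1, lt_of_le_of_ne htmem.2 htne⟩
    rw [map_mul, map_mul, hg, map_pow, Complex.conj_ofReal, hr, Complex.conj_ofReal]
  have real2 : ∀ (g : Polynomial ℂ), (∀ t : ℝ, (starRingEnd ℂ) (g.eval (t:ℂ)) = g.eval (t:ℂ)) →
      ∀ k : ℕ, (starRingEnd ℂ) (∫ t in (0:ℝ)..α, g.eval (t:ℂ) * (t:ℂ)^k * fTrans a b s₂ t * s₁ t)
        = ∫ t in (0:ℝ)..α, g.eval (t:ℂ) * (t:ℂ)^k * fTrans a b s₂ t * s₁ t := by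
    intro g hg k
    rw [← _root_.intervalIntegral_conj]
    apply intervalIntegral.integral_congr_ae
    filter_upwards [hane] with t htne htmem
    rw [Set.uIoc_of_le h0α] at htmem
    obtain ⟨r, _, hr⟩ := hs₁real t ⟨htmem.1, lt_of_le_of_ne htmem.2 htne⟩
    rw [map_mul, map_mul, map_mul, hg, map_pow, Complex.conj_ofReal, fTrans_conj,
      hr, Complex.conj_ofReal]
  -- the main induction
  have main : ∀ n : ℕ,
      (Q n).natDegree = n ∧
      (∀ z : ℂ, (Q n).eval (ω * z) = ω ^ n * (Q n).eval z) ∧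
      (∀ t : ℝ, (starRingEnd ℂ) ((Q n).eval (t:ℂ)) = (Q n).eval (t:ℂ)) ∧
      (n ≤ 2 → Q n = Polynomial.X ^ n) ∧
      (∀ p : ℕ, n = p + 3 → ∃ an : ℝ,
        Polynomial.X * Q (p + 2) = Q (p + 3) + Polynomial.C ((an:ℝ) : ℂ) * Q p ∧
        (∀ m : ℕ, p + 2 = 2 * m →
          ((an:ℝ) : ℂ) = (∫ t in (0:ℝ)..α, (t:ℂ)^m * (Q (p+2)).eval (t:ℂ) * s₁ (t:ℂ)) /
            (∫ t in (0:ℝ)..α, (t:ℂ)^(m-1) * (Q p).eval (t:ℂ) * s₁ (t:ℂ))) ∧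
        (∀ m : ℕ, p + 2 = 2 * m + 1 →
          ((an:ℝ) : ℂ) = (∫ t in (0:ℝ)..α, (t:ℂ)^m * (Q (p+2)).eval (t:ℂ) *
              fTrans a b s₂ (t:ℂ) * s₁ (t:ℂ)) /
            (∫ t in (0:ℝ)..α, (t:ℂ)^(m-1) * (Q p).eval (t:ℂ) *
              fTrans a b s₂ (t:ℂ) * s₁ (t:ℂ)))) := by
    intro n
    induction n using Nat.strong_induction_on with
    | _ n ih =>
    rcases lt_or_ge n 3 with hlt | hge
    · -- base cases
      interval_cases n
      · -- n = 0
        have h1 : OrthCond α a b s₁ s₂ 1 0 :=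
          ⟨fun k hk => absurd hk (by omega), fun k hk => absurd hk (by omega)⟩
        have hle := (hQ 0).2.2 1 Polynomial.monic_one h1
        rw [Polynomial.degree_one] at hle
        have hd0 : (Q 0).natDegree = 0 := Polynomial.natDegree_eq_zero_iff_degree_le_zero.mpr hle
        have hQ0 : Q 0 = 1 := (hQ 0).1.natDegree_eq_zero.mp hd0
        refine ⟨hd0, ?_, ?_, ?_, ?_⟩
        · intro z; rw [hQ0]; simp
        · intro t; rw [hQ0]; simp
        · intro _; rw [hQ0, pow_zero]
        · intro p hp; omega
      · -- n = 1
        have horthX : OrthCond α a b s₁ s₂ Polynomial.X 1 := by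
          constructor
          · intro k hk
            have hk0 : k = 0 := by omega
            subst hk0
            rw [ray1 Polynomial.X 1 (fun z => by simp) 0, if_neg (by omega), zero_mul]
          · intro k hk; exact absurd hk (by omega)
        have hle := (hQ 1).2.2 Polynomial.X Polynomial.monic_X horthX
        rw [Polynomial.degree_X] at hle
        have hnd : (Q 1).natDegree ≤ 1 := Polynomial.natDegree_le_iff_degree_le.mpr
          (by exact_mod_cast hle)
        have hne0 : (Q 1).natDegree ≠ 0 := by
          intro h0
          have hQ1 : Q 1 = 1 := (hQ 1).1.natDegree_eq_zero.mp h0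
          have h0cond := (hQ 1).2.1.1 0 (by omega)
          rw [hQ1] at h0cond
          rw [ray1 1 0 (fun z => by simp) 0, if_pos (by omega)] at h0cond
          have := (mul_eq_zero.mp h0cond).resolve_left (by norm_num)
          rw [intone] at this
          exact hs₁ne this
        have hd1 : (Q 1).natDegree = 1 := by omega
        have hjall1 : ∀ j, j ≤ 1 → (Q j).natDegree = j := by
          intro j hj
          interval_cases j
          · exact (ih 0 (by omega)).1
          · exact hd1
        have hQ1 : Q 1 = Polynomial.X :=
          (uniq 1 hjall1 Polynomial.X Polynomial.monic_X horthX Polynomial.natDegree_X).symm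
        refine ⟨hd1, ?_, ?_, ?_, ?_⟩
        · intro z; rw [hQ1]; simp
        · intro t; rw [hQ1]; simp [Complex.conj_ofReal]
        · intro _; rw [hQ1, pow_one]
        · intro p hp; omega
      · -- n = 2
        have horth2 : OrthCond α a b s₁ s₂ (Polynomial.X ^ 2) 2 := by
          constructor
          · intro k hk
            have hk0 : k = 0 := by omega
            subst hk0
            rw [ray1 (Polynomial.X ^ 2) 2 (fun z => by simp [mul_pow]) 0,
              if_neg (by omega), zero_mul]
          · intro k hk
            have hk0 : k = 0 := by omega
            subst hk0
            rw [ray2 (Polynomial.X ^ 2) 2 (fun z => by simp [mul_pow]) 0,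
              if_neg (by omega), zero_mul]
        have hle := (hQ 2).2.2 (Polynomial.X ^ 2) (Polynomial.monic_X_pow 2) horth2
        rw [Polynomial.degree_X_pow] at hle
        have hnd : (Q 2).natDegree ≤ 2 := Polynomial.natDegree_le_iff_degree_le.mpr
          (by exact_mod_cast hle)
        have hjall1 : ∀ j, j ≤ 1 → (Q j).natDegree = j := by
          intro j hj
          interval_cases j
          · exact (ih 0 (by omega)).1
          · exact (ih 1 (by omega)).1
        have hQ1X : Q 1 = Polynomial.X := by
          have := (ih 1 (by omega)).2.2.2.1 (by omega)
          rwa [pow_one] at this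
        have hne0 : (Q 2).natDegree ≠ 0 := by
          intro h0
          have hQ2 : Q 2 = 1 := (hQ 2).1.natDegree_eq_zero.mp h0
          have h0cond := (hQ 2).2.1.1 0 (by omega)
          rw [hQ2] at h0cond
          rw [ray1 1 0 (fun z => by simp) 0, if_pos (by omega)] at h0cond
          have := (mul_eq_zero.mp h0cond).resolve_left (by norm_num)
          rw [intone] at this
          exact hs₁ne this
        have hne1 : (Q 2).natDegree ≠ 1 := by
          intro h1
          have hQ2X : Q 2 = Polynomial.X := by
            rw [← hQ1X]
            exact uniq 1 hjall1 (Q 2) (hQ 2).1 (mono (Q 2) 1 2 (by omega) (hQ 2).2.1) h1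
          have h0cond := (hQ 2).2.1.2 0 (by omega)
          rw [hQ2X] at h0cond
          rw [ray2 Polynomial.X 1 (fun z => by simp) 0, if_pos (by omega)] at h0cond
          have hz := (mul_eq_zero.mp h0cond).resolve_left (by norm_num)
          have hd := (hden 1 le_rfl).2
          rw [show 2*1-1 = 1 from rfl, hQ1X] at hd
          apply hd
          rw [← hz]
          apply intervalIntegral.integral_congr
          intro t _
          simp
        have hd2 : (Q 2).natDegree = 2 := by omega
        have hjall2 : ∀ j, j ≤ 2 → (Q j).natDegree = j := by
          intro j hj
          interval_cases j
          · exact (ih 0 (by omega)).1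
          · exact (ih 1 (by omega)).1
          · exact hd2
        have hQ2 : Q 2 = Polynomial.X ^ 2 :=
          (uniq 2 hjall2 (Polynomial.X ^ 2) (Polynomial.monic_X_pow 2) horth2
            (Polynomial.natDegree_X_pow 2)).symm
        refine ⟨hd2, ?_, ?_, ?_, ?_⟩
        · intro z; rw [hQ2]; simp [mul_pow]
        · intro t; rw [hQ2]; simp [Complex.conj_ofReal]
        · intro _; rw [hQ2]
        · intro p hp; omega
    · -- inductive step
      obtain ⟨p, rfl⟩ : ∃ p, n = p + 3 := ⟨n - 3, by omega⟩
      have ihsym2 : ∀ z : ℂ, (Q (p+2)).eval (ω*z) = ω^(p+2) * (Q (p+2)).eval z :=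
        (ih (p+2) (by omega)).2.1
      have ihsym0 : ∀ z : ℂ, (Q p).eval (ω*z) = ω^p * (Q p).eval z := (ih p (by omega)).2.1
      have ihconj2 := (ih (p+2) (by omega)).2.2.1
      have ihconj0 := (ih p (by omega)).2.2.1
      have hjall : ∀ j, j ≤ p+2 → (Q j).natDegree = j := fun j hj => (ih j (by omega)).1
      have hdeg2 : (Q (p+2)).natDegree = p+2 := hjall _ le_rfl
      have hdeg0 : (Q p).natDegree = p := hjall p (by omega)
      have hQm2 := (hQ (p+2)).1
      have hQm0 := (hQ p).1
      rcases Nat.even_or_odd p with ⟨q, hq⟩ | ⟨q, hq⟩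
      · -- p even : p = q + q, level p + 2 = 2(q+1) even
        set num := ∫ t in (0:ℝ)..α, (Q (p+2)).eval (t:ℂ) * (t:ℂ)^(q+1) * s₁ t with hnumdef
        set den := ∫ t in (0:ℝ)..α, (Q p).eval (t:ℂ) * (t:ℂ)^q * s₁ t with hdendef
        have hdenne : den ≠ 0 := by
          have h := (hden (q+1) (by omega)).1
          rw [show 2*(q+1)-2 = p from by omega] at h
          have heq : (∫ t in (0:ℝ)..α, (t:ℂ)^((q+1)-1) * (Q p).eval (t:ℂ) * s₁ (t:ℂ)) = den := by
            rw [hdendef]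
            exact intervalIntegral.integral_congr (fun t _ => by
              rw [show (q+1)-1 = q from rfl]; ring)
          rwa [heq] at h
        have hnumne : num ≠ 0 := by
          have h := (hden (q+2) (by omega)).1
          rw [show 2*(q+2)-2 = p+2 from by omega] at h
          have heq : (∫ t in (0:ℝ)..α, (t:ℂ)^((q+2)-1) * (Q (p+2)).eval (t:ℂ) * s₁ (t:ℂ)) = num := by
            rw [hnumdef]
            exact intervalIntegral.integral_congr (fun t _ => by
              rw [show (q+2)-1 = q+1 from rfl]; ring)
          rwa [heq] at h
        set aC := num / den with haCdef
        set P := Polynomial.X * Q (p+2) - Polynomial.C aC * Q p with hPdef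
        have hPsym : ∀ z : ℂ, P.eval (ω*z) = ω^(p+3) * P.eval z := by
          intro z
          rw [hPdef]
          simp only [Polynomial.eval_sub, Polynomial.eval_mul, Polynomial.eval_C,
            Polynomial.eval_X]
          rw [ihsym2, ihsym0]
          have h3 : ω^(p+3) = ω^p := by
            rw [pow_add, omega_pow_three, mul_one]
          have h4 : ω * ω^(p+2) = ω^p := by
            rw [← pow_succ', ← h3]
          rw [h3]
          linear_combination (z * Polynomial.eval z (Q (p+2))) * h4
        have hXQ : (Polynomial.X * Q (p+2)).Monic := Polynomial.monic_X.mul hQm2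
        have hdXQ : (Polynomial.X * Q (p+2)).natDegree = p+3 := by
          rw [Polynomial.natDegree_mul Polynomial.X_ne_zero hQm2.ne_zero,
            Polynomial.natDegree_X, hdeg2]
          omega
        have hdc : (Polynomial.C aC * Q p).degree < (Polynomial.X * Q (p+2)).degree := by
          apply lt_of_le_of_lt (Polynomial.degree_mul_le _ _)
          rw [Polynomial.degree_eq_natDegree hXQ.ne_zero, hdXQ]
          calc (Polynomial.C aC).degree + (Q p).degree ≤ 0 + (p : WithBot ℕ) := by
                apply add_le_add Polynomial.degree_C_le
                rw [Polynomial.degree_eq_natDegree hQm0.ne_zero, hdeg0]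
            _ = (p : WithBot ℕ) := zero_add _
            _ < ((p+3 : ℕ) : WithBot ℕ) := by exact_mod_cast (by omega : p < p+3)
        have hPm : P.Monic := by
          rw [hPdef, sub_eq_add_neg]
          exact hXQ.add_of_left (by rwa [Polynomial.degree_neg])
        have hPdeg : P.natDegree = p + 3 := by
          have hPd' : P.degree = ((p+3 : ℕ) : WithBot ℕ) := by
            rw [hPdef, Polynomial.degree_sub_eq_left_of_degree_lt hdc,
              Polynomial.degree_eq_natDegree hXQ.ne_zero, hdXQ]
          exact Polynomial.natDegree_eq_of_degree_eq_some hPd'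
        have hPorth : OrthCond α a b s₁ s₂ P (p+3) := by
          constructor
          · intro k hk
            rw [ray1 P (p+3) hPsym k]
            by_cases hd : 3 ∣ (p+3+k+3)
            · rw [if_pos hd]
              apply mul_eq_zero_of_right
              have hsplit : (∫ t in (0:ℝ)..α, P.eval (t:ℂ) * (t:ℂ)^k * s₁ t)
                  = (∫ t in (0:ℝ)..α, (Q (p+2)).eval (t:ℂ) * (t:ℂ)^(k+1) * s₁ t)
                    - aC * ∫ t in (0:ℝ)..α, (Q p).eval (t:ℂ) * (t:ℂ)^k * s₁ t := by
                rw [← intervalIntegral.integral_const_mul,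
                  ← intervalIntegral.integral_sub (hint1' (Q (p+2)) (k+1))
                    ((hint1' (Q p) k).const_mul aC)]
                apply intervalIntegral.integral_congr
                intro t _
                rw [hPdef]
                simp only [Polynomial.eval_sub, Polynomial.eval_mul, Polynomial.eval_C,
                  Polynomial.eval_X]
                ring
              rw [hsplit]
              by_cases hkb : k = q
              · subst hkb
                rw [← hnumdef, ← hdendef, haCdef, div_mul_cancel₀ _ hdenne, sub_self]
              · rw [cond1 (p+2) ihsym2 (k+1) (by omega) (by omega),
                  cond1 p ihsym0 k (by omega) (by omega)]
                simp
            · rw [if_neg hd, zero_mul]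
          · intro k hk
            rw [ray2 P (p+3) hPsym k]
            by_cases hd : 3 ∣ (p+3+k+5)
            · rw [if_pos hd]
              apply mul_eq_zero_of_right
              have hsplit : (∫ t in (0:ℝ)..α, P.eval (t:ℂ) * (t:ℂ)^k * fTrans a b s₂ t * s₁ t)
                  = (∫ t in (0:ℝ)..α,
                      (Q (p+2)).eval (t:ℂ) * (t:ℂ)^(k+1) * fTrans a b s₂ t * s₁ t)
                    - aC * ∫ t in (0:ℝ)..α,
                      (Q p).eval (t:ℂ) * (t:ℂ)^k * fTrans a b s₂ t * s₁ t := by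
                rw [← intervalIntegral.integral_const_mul,
                  ← intervalIntegral.integral_sub (hint2' (Q (p+2)) (k+1))
                    ((hint2' (Q p) k).const_mul aC)]
                apply intervalIntegral.integral_congr
                intro t _
                rw [hPdef]
                simp only [Polynomial.eval_sub, Polynomial.eval_mul, Polynomial.eval_C,
                  Polynomial.eval_X]
                ring
              rw [hsplit, cond2 (p+2) ihsym2 (k+1) (by omega) (by omega),
                cond2 p ihsym0 k (by omega) (by omega)]
              simp
            · rw [if_neg hd, zero_mul]
        have hnosol : ∀ R : Polynomial ℂ, R.Monic → OrthCond α a b s₁ s₂ R (p+3) →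
            p+3 ≤ R.natDegree := by
          intro R hRm hRo
          by_contra hcon
          push_neg at hcon
          rcases lt_or_eq_of_le (by omega : R.natDegree ≤ p+2) with hlt2 | heq
          · have hcond := mono R (R.natDegree+1) (p+3) (by omega) hRo
            have hmin := (hQ (R.natDegree+1)).2.2 R hRm hcond
            have h1 := Polynomial.natDegree_le_natDegree hmin
            have h2 := hjall (R.natDegree+1) (by omega)
            omega
          · have hQQ : R = Q (p+2) :=
              uniq (p+2) hjall R hRm (mono R (p+2) (p+3) (by omega) hRo) heq
            have hx := hRo.1 (q+1) (by omega)
            rw [hQQ] at hx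
            rw [ray1 (Q (p+2)) (p+2) ihsym2 (q+1), if_pos (by omega)] at hx
            have hz := (mul_eq_zero.mp hx).resolve_left (by norm_num)
            exact hnumne (by rw [hnumdef]; exact hz)
        have hminle := (hQ (p+3)).2.2 P hPm hPorth
        have hndle : (Q (p+3)).natDegree ≤ p+3 := by
          have h1 := Polynomial.natDegree_le_natDegree hminle
          omega
        have hnolow : (Q (p+3)).natDegree = p+3 :=
          le_antisymm hndle (hnosol (Q (p+3)) (hQ (p+3)).1 (hQ (p+3)).2.1)
        have hQP : Q (p+3) = P := by
          by_contra hne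
          have hD : Q (p+3) - P ≠ 0 := sub_ne_zero.mpr hne
          have hdlt : (Q (p+3) - P).degree < (Q (p+3)).degree := by
            apply Polynomial.degree_sub_lt _ (hQ (p+3)).1.ne_zero
            · rw [(hQ (p+3)).1.leadingCoeff, hPm.leadingCoeff]
            · rw [Polynomial.degree_eq_natDegree (hQ (p+3)).1.ne_zero,
                Polynomial.degree_eq_natDegree hPm.ne_zero, hnolow, hPdeg]
          have hcne : (((Q (p+3)) - P).leadingCoeff)⁻¹ ≠ 0 :=
            inv_ne_zero (Polynomial.leadingCoeff_ne_zero.mpr hD)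
          have hDm : (Polynomial.C (((Q (p+3)) - P).leadingCoeff)⁻¹ * (Q (p+3) - P)).Monic := by
            rw [mul_comm]
            exact Polynomial.monic_mul_leadingCoeff_inv hD
          have hDo := orth_sub_smul (Q (p+3)) P (((Q (p+3)) - P).leadingCoeff)⁻¹ (p+3)
            (hQ (p+3)).2.1 hPorth
          have hDlow := hnosol _ hDm hDo
          have hDdeg : (Polynomial.C (((Q (p+3)) - P).leadingCoeff)⁻¹ * (Q (p+3) - P)).natDegree
              < p + 3 := by
            rw [Polynomial.natDegree_C_mul hcne]
            have := Polynomial.natDegree_lt_natDegree hD hdlt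
            omega
          omega
        have haC : (starRingEnd ℂ) aC = aC := by
          rw [haCdef, map_div₀]
          rw [hnumdef, hdendef, real1 (Q (p+2)) ihconj2 (q+1), real1 (Q p) ihconj0 q]
        refine ⟨hnolow, ?_, ?_, ?_, ?_⟩
        · intro z; rw [hQP]; exact hPsym z
        · intro t
          rw [hQP, hPdef]
          simp only [Polynomial.eval_sub, Polynomial.eval_mul, Polynomial.eval_C,
            Polynomial.eval_X, map_sub, map_mul]
          rw [haC, ihconj2 t, ihconj0 t, Complex.conj_ofReal]
        · intro hle2; omega
        · intro p' hp'
          have hpp : p' = p := by omega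
          subst hpp
          obtain ⟨ar, har⟩ : ∃ ar : ℝ, (ar : ℂ) = aC :=
            ⟨aC.re, Complex.conj_eq_iff_re.mp haC⟩
          refine ⟨ar, ?_, ?_, ?_⟩
          · rw [har, hQP, hPdef]; ring
          · intro m hm
            have hmq : m = q+1 := by omega
            subst hmq
            rw [har, haCdef, hnumdef, hdendef]
            congr 1
            · exact intervalIntegral.integral_congr (fun t _ => by ring)
            · apply intervalIntegral.integral_congr
              intro t _
              rw [show q+1-1 = q from rfl]
              ring
          · intro m hm; omega
      · -- p odd : p = 2q+1, level p + 2 = 2(q+1)+1 odd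
        set num := ∫ t in (0:ℝ)..α,
          (Q (p+2)).eval (t:ℂ) * (t:ℂ)^(q+1) * fTrans a b s₂ t * s₁ t with hnumdef
        set den := ∫ t in (0:ℝ)..α,
          (Q p).eval (t:ℂ) * (t:ℂ)^q * fTrans a b s₂ t * s₁ t with hdendef
        have hdenne : den ≠ 0 := by
          have h := (hden (q+1) (by omega)).2
          rw [show 2*(q+1)-1 = p from by omega] at h
          have heq : (∫ t in (0:ℝ)..α,
              (t:ℂ)^((q+1)-1) * (Q p).eval (t:ℂ) * fTrans a b s₂ (t:ℂ) * s₁ (t:ℂ)) = den := by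
            rw [hdendef]
            exact intervalIntegral.integral_congr (fun t _ => by
              rw [show (q+1)-1 = q from rfl]; ring)
          rwa [heq] at h
        have hnumne : num ≠ 0 := by
          have h := (hden (q+2) (by omega)).2
          rw [show 2*(q+2)-1 = p+2 from by omega] at h
          have heq : (∫ t in (0:ℝ)..α,
              (t:ℂ)^((q+2)-1) * (Q (p+2)).eval (t:ℂ) * fTrans a b s₂ (t:ℂ) * s₁ (t:ℂ)) = num := by
            rw [hnumdef]
            exact intervalIntegral.integral_congr (fun t _ => by
              rw [show (q+2)-1 = q+1 from rfl]; ring)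
          rwa [heq] at h
        set aC := num / den with haCdef
        set P := Polynomial.X * Q (p+2) - Polynomial.C aC * Q p with hPdef
        have hPsym : ∀ z : ℂ, P.eval (ω*z) = ω^(p+3) * P.eval z := by
          intro z
          rw [hPdef]
          simp only [Polynomial.eval_sub, Polynomial.eval_mul, Polynomial.eval_C,
            Polynomial.eval_X]
          rw [ihsym2, ihsym0]
          have h3 : ω^(p+3) = ω^p := by
            rw [pow_add, omega_pow_three, mul_one]
          have h4 : ω * ω^(p+2) = ω^p := by
            rw [← pow_succ', ← h3]
          rw [h3]
          linear_combination (z * Polynomial.eval z (Q (p+2))) * h4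
        have hXQ : (Polynomial.X * Q (p+2)).Monic := Polynomial.monic_X.mul hQm2
        have hdXQ : (Polynomial.X * Q (p+2)).natDegree = p+3 := by
          rw [Polynomial.natDegree_mul Polynomial.X_ne_zero hQm2.ne_zero,
            Polynomial.natDegree_X, hdeg2]
          omega
        have hdc : (Polynomial.C aC * Q p).degree < (Polynomial.X * Q (p+2)).degree := by
          apply lt_of_le_of_lt (Polynomial.degree_mul_le _ _)
          rw [Polynomial.degree_eq_natDegree hXQ.ne_zero, hdXQ]
          calc (Polynomial.C aC).degree + (Q p).degree ≤ 0 + (p : WithBot ℕ) := by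
                apply add_le_add Polynomial.degree_C_le
                rw [Polynomial.degree_eq_natDegree hQm0.ne_zero, hdeg0]
            _ = (p : WithBot ℕ) := zero_add _
            _ < ((p+3 : ℕ) : WithBot ℕ) := by exact_mod_cast (by omega : p < p+3)
        have hPm : P.Monic := by
          rw [hPdef, sub_eq_add_neg]
          exact hXQ.add_of_left (by rwa [Polynomial.degree_neg])
        have hPdeg : P.natDegree = p + 3 := by
          have hPd' : P.degree = ((p+3 : ℕ) : WithBot ℕ) := by
            rw [hPdef, Polynomial.degree_sub_eq_left_of_degree_lt hdc,
              Polynomial.degree_eq_natDegree hXQ.ne_zero, hdXQ]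
          exact Polynomial.natDegree_eq_of_degree_eq_some hPd'
        have hPorth : OrthCond α a b s₁ s₂ P (p+3) := by
          constructor
          · intro k hk
            rw [ray1 P (p+3) hPsym k]
            by_cases hd : 3 ∣ (p+3+k+3)
            · rw [if_pos hd]
              apply mul_eq_zero_of_right
              have hsplit : (∫ t in (0:ℝ)..α, P.eval (t:ℂ) * (t:ℂ)^k * s₁ t)
                  = (∫ t in (0:ℝ)..α, (Q (p+2)).eval (t:ℂ) * (t:ℂ)^(k+1) * s₁ t)
                    - aC * ∫ t in (0:ℝ)..α, (Q p).eval (t:ℂ) * (t:ℂ)^k * s₁ t := by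
                rw [← intervalIntegral.integral_const_mul,
                  ← intervalIntegral.integral_sub (hint1' (Q (p+2)) (k+1))
                    ((hint1' (Q p) k).const_mul aC)]
                apply intervalIntegral.integral_congr
                intro t _
                rw [hPdef]
                simp only [Polynomial.eval_sub, Polynomial.eval_mul, Polynomial.eval_C,
                  Polynomial.eval_X]
                ring
              rw [hsplit, cond1 (p+2) ihsym2 (k+1) (by omega) (by omega),
                cond1 p ihsym0 k (by omega) (by omega)]
              simp
            · rw [if_neg hd, zero_mul]
          · intro k hk
            rw [ray2 P (p+3) hPsym k]
            by_cases hd : 3 ∣ (p+3+k+5)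
            · rw [if_pos hd]
              apply mul_eq_zero_of_right
              have hsplit : (∫ t in (0:ℝ)..α, P.eval (t:ℂ) * (t:ℂ)^k * fTrans a b s₂ t * s₁ t)
                  = (∫ t in (0:ℝ)..α,
                      (Q (p+2)).eval (t:ℂ) * (t:ℂ)^(k+1) * fTrans a b s₂ t * s₁ t)
                    - aC * ∫ t in (0:ℝ)..α,
                      (Q p).eval (t:ℂ) * (t:ℂ)^k * fTrans a b s₂ t * s₁ t := by
                rw [← intervalIntegral.integral_const_mul,
                  ← intervalIntegral.integral_sub (hint2' (Q (p+2)) (k+1))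
                    ((hint2' (Q p) k).const_mul aC)]
                apply intervalIntegral.integral_congr
                intro t _
                rw [hPdef]
                simp only [Polynomial.eval_sub, Polynomial.eval_mul, Polynomial.eval_C,
                  Polynomial.eval_X]
                ring
              rw [hsplit]
              by_cases hkb : k = q
              · subst hkb
                rw [← hnumdef, ← hdendef, haCdef, div_mul_cancel₀ _ hdenne, sub_self]
              · rw [cond2 (p+2) ihsym2 (k+1) (by omega) (by omega),
                  cond2 p ihsym0 k (by omega) (by omega)]
                simp
            · rw [if_neg hd, zero_mul]
        have hnosol : ∀ R : Polynomial ℂ, R.Monic → OrthCond α a b s₁ s₂ R (p+3) →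
            p+3 ≤ R.natDegree := by
          intro R hRm hRo
          by_contra hcon
          push_neg at hcon
          rcases lt_or_eq_of_le (by omega : R.natDegree ≤ p+2) with hlt2 | heq
          · have hcond := mono R (R.natDegree+1) (p+3) (by omega) hRo
            have hmin := (hQ (R.natDegree+1)).2.2 R hRm hcond
            have h1 := Polynomial.natDegree_le_natDegree hmin
            have h2 := hjall (R.natDegree+1) (by omega)
            omega
          · have hQQ : R = Q (p+2) :=
              uniq (p+2) hjall R hRm (mono R (p+2) (p+3) (by omega) hRo) heq
            have hx := hRo.2 (q+1) (by omega)
            rw [hQQ] at hx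
            rw [ray2 (Q (p+2)) (p+2) ihsym2 (q+1), if_pos (by omega)] at hx
            have hz := (mul_eq_zero.mp hx).resolve_left (by norm_num)
            exact hnumne (by rw [hnumdef]; exact hz)
        have hminle := (hQ (p+3)).2.2 P hPm hPorth
        have hndle : (Q (p+3)).natDegree ≤ p+3 := by
          have h1 := Polynomial.natDegree_le_natDegree hminle
          omega
        have hnolow : (Q (p+3)).natDegree = p+3 :=
          le_antisymm hndle (hnosol (Q (p+3)) (hQ (p+3)).1 (hQ (p+3)).2.1)
        have hQP : Q (p+3) = P := by
          by_contra hne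
          have hD : Q (p+3) - P ≠ 0 := sub_ne_zero.mpr hne
          have hdlt : (Q (p+3) - P).degree < (Q (p+3)).degree := by
            apply Polynomial.degree_sub_lt _ (hQ (p+3)).1.ne_zero
            · rw [(hQ (p+3)).1.leadingCoeff, hPm.leadingCoeff]
            · rw [Polynomial.degree_eq_natDegree (hQ (p+3)).1.ne_zero,
                Polynomial.degree_eq_natDegree hPm.ne_zero, hnolow, hPdeg]
          have hcne : (((Q (p+3)) - P).leadingCoeff)⁻¹ ≠ 0 :=
            inv_ne_zero (Polynomial.leadingCoeff_ne_zero.mpr hD)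
          have hDm : (Polynomial.C (((Q (p+3)) - P).leadingCoeff)⁻¹ * (Q (p+3) - P)).Monic := by
            rw [mul_comm]
            exact Polynomial.monic_mul_leadingCoeff_inv hD
          have hDo := orth_sub_smul (Q (p+3)) P (((Q (p+3)) - P).leadingCoeff)⁻¹ (p+3)
            (hQ (p+3)).2.1 hPorth
          have hDlow := hnosol _ hDm hDo
          have hDdeg : (Polynomial.C (((Q (p+3)) - P).leadingCoeff)⁻¹ * (Q (p+3) - P)).natDegree
              < p + 3 := by
            rw [Polynomial.natDegree_C_mul hcne]
            have := Polynomial.natDegree_lt_natDegree hD hdlt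
            omega
          omega
        have haC : (starRingEnd ℂ) aC = aC := by
          rw [haCdef, map_div₀]
          rw [hnumdef, hdendef, real2 (Q (p+2)) ihconj2 (q+1), real2 (Q p) ihconj0 q]
        refine ⟨hnolow, ?_, ?_, ?_, ?_⟩
        · intro z; rw [hQP]; exact hPsym z
        · intro t
          rw [hQP, hPdef]
          simp only [Polynomial.eval_sub, Polynomial.eval_mul, Polynomial.eval_C,
            Polynomial.eval_X, map_sub, map_mul]
          rw [haC, ihconj2 t, ihconj0 t, Complex.conj_ofReal]
        · intro hle2; omega
        · intro p' hp'
          have hpp : p' = p := by omega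
          subst hpp
          obtain ⟨ar, har⟩ : ∃ ar : ℝ, (ar : ℂ) = aC :=
            ⟨aC.re, Complex.conj_eq_iff_re.mp haC⟩
          refine ⟨ar, ?_, ?_, ?_⟩
          · rw [har, hQP, hPdef]; ring
          · intro m hm; omega
          · intro m hm
            have hmq : m = q+1 := by omega
            subst hmq
            rw [har, haCdef, hnumdef, hdendef]
            congr 1
            · exact intervalIntegral.integral_congr (fun t _ => by ring)
            · apply intervalIntegral.integral_congr
              intro t _
              rw [show q+1-1 = q from rfl]
              ring
  -- extract the final statement
  constructor
  · intro j hj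
    exact (main j).2.2.2.1 hj
  · intro n hn
    obtain ⟨an, hrec, he, ho⟩ := (main (n+1)).2.2.2.2 (n-2) (by omega)
    rw [show n-2+2 = n from by omega] at hrec he ho
    rw [show n-2+3 = n+1 from by omega] at hrec
    exact ⟨an, hrec, he, ho⟩

end
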